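/- Let f be a multivariate formal power series over ℂ in variables indexed by Fin 2 (or any finite type σ), let a ≥ 1 be a natural number, let k be a nonzero multi-index, and let j be an index with k j > 0. Then (k j) · coeff k (f^a) = a · ∑_{(m,n) ∈ antidiagonal k, m j > 0} (m j) · (coeff m f) · (coeff n (f^{a−1})). -/

import Mathlib

open Finset

section Aux

variable {σ : Type*} [DecidableEq σ]

/-- Coefficient-wise operator `D j f` with `coeff m (D j f) = (m j) • coeff m f`. -/
noncomputable def auxD (j : σ) (f : MvPowerSeries σ ℂ) : MvPowerSeries σ ℂ :=
  fun m => (m j : ℂ) * MvPowerSeries.coeff m f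

lemma coeff_auxD (j : σ) (f : MvPowerSeries σ ℂ) (m : σ →₀ ℕ) :
    MvPowerSeries.coeff m (auxD j f) = (m j : ℂ) * MvPowerSeries.coeff m f := rfl

lemma auxD_mul (j : σ) (f g : MvPowerSeries σ ℂ) :
    auxD j (f * g) = auxD j f * g + f * auxD j g := by
  ext k
  rw [map_add, MvPowerSeries.coeff_mul, MvPowerSeries.coeff_mul, coeff_auxD,
    MvPowerSeries.coeff_mul, Finset.mul_sum, ← Finset.sum_add_distrib]
  refine Finset.sum_congr rfl fun p hp => ?_
  rw [Finset.HasAntidiagonal.mem_antidiagonal] at hp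
  have : (k j : ℂ) = (p.1 j : ℂ) + (p.2 j : ℂ) := by
    rw [← hp]; push_cast [Finsupp.add_apply]; ring
  rw [this, coeff_auxD, coeff_auxD]
  ring

lemma auxD_pow (j : σ) (f : MvPowerSeries σ ℂ) (a : ℕ) :
    auxD j (f ^ (a + 1)) = ((a : ℂ) + 1) • (auxD j f * f ^ a) := by
  induction a with
  | zero => simp
  | succ a ih =>
      rw [pow_succ, auxD_mul, ih]
      have hc : ((a + 1 : ℕ) : ℂ) + 1 = ((a : ℂ) + 1) + 1 := by push_cast; ring
      rw [hc, smul_mul_assoc, mul_assoc, ← pow_succ,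
        mul_comm (f ^ (a + 1)) (auxD j f)]
      module

end Aux

/-- Multivariate recurrence relation for the coefficients of powers of a multivariate formal
power series, obtained from the identity `∂_{s_j}(f^a) = a·f^{a−1}·∂_{s_j} f`:
`(k j) · coeff k (f^a) = a · ∑_{(m,n) ∈ antidiagonal k, m j > 0} (m j)·(coeff m f)·(coeff n (f^{a−1}))`. -/
theorem coeff_pow_recurrence
    (σ : Type*) [Fintype σ] [DecidableEq σ]
    (f : MvPowerSeries σ ℂ) (a : ℕ) (ha : 1 ≤ a)
    (k : σ →₀ ℕ) (hk : k ≠ 0) (j : σ) (hj : 0 < k j) :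
    (k j : ℂ) * MvPowerSeries.coeff k (f ^ a) =
      (a : ℂ) * ∑ p ∈ (Finset.HasAntidiagonal.antidiagonal k).filter
          (fun p : (σ →₀ ℕ) × (σ →₀ ℕ) => 0 < p.1 j),
        (p.1 j : ℂ) * MvPowerSeries.coeff p.1 f * MvPowerSeries.coeff p.2 (f ^ (a - 1)) := by
  obtain ⟨b, rfl⟩ : ∃ b, a = b + 1 := ⟨a - 1, (Nat.succ_pred_eq_of_pos ha).symm⟩
  have h1 : (k j : ℂ) * MvPowerSeries.coeff k (f ^ (b + 1)) =
      MvPowerSeries.coeff k (auxD j (f ^ (b + 1))) := (coeff_auxD j _ k).symm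
  rw [h1, auxD_pow, map_smul, smul_eq_mul, MvPowerSeries.coeff_mul]
  have hsum : ∑ p ∈ Finset.HasAntidiagonal.antidiagonal k,
      MvPowerSeries.coeff p.1 (auxD j f) * MvPowerSeries.coeff p.2 (f ^ b) =
      ∑ p ∈ (Finset.HasAntidiagonal.antidiagonal k).filter
          (fun p : (σ →₀ ℕ) × (σ →₀ ℕ) => 0 < p.1 j),
        (p.1 j : ℂ) * MvPowerSeries.coeff p.1 f * MvPowerSeries.coeff p.2 (f ^ b) := by
    rw [Finset.sum_filter]
    refine Finset.sum_congr rfl fun p _ => ?_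
    rw [coeff_auxD, mul_assoc]
    by_cases h : 0 < p.1 j
    · rw [if_pos h]
    · rw [if_neg h]
      have : p.1 j = 0 := Nat.eq_zero_of_not_pos h
      simp [this]
  rw [hsum]
  have : b + 1 - 1 = b := rfl
  rw [this]
  push_cast
  ring
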